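/- Let m = ⊕_{i ≤ -2} g(i) ⊕ g(-1)' and m' = m (if dim g(-1)_1̄ is even) or m ⊕ C·v (if dim g(-1)_1̄ is odd, where v spans the orthogonal complement of g(-1)'_1̄ ⊕ (g(-1)_1̄ ∩ (g(-1)'_1̄)^⊥ minus v)). Then the annihilator m^⊥ = {y ∈ g : (y, m) = 0} decomposes as a direct sum m^⊥ = [m', e] ⊕ g^f, where g^f is the centralizer of f in g. -/

import Mathlib

/-- The annihilator `m^⊥ = {y ∈ g : (y, m) = 0}` of a subspace `m` with respect to a
bilinear form `B`. -/
def perpSubmodule {L : Type*} [AddCommGroup L] [Module ℂ L]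
    (B : L →ₗ[ℂ] L →ₗ[ℂ] ℂ) (m : Submodule ℂ L) : Submodule ℂ L where
  carrier := {x | ∀ y ∈ m, B x y = 0}
  add_mem' := by
    intro x x' hx hx' y hy
    simp only [Set.mem_setOf_eq] at hx hx'
    simp [map_add, hx y hy, hx' y hy]
  zero_mem' := by
    intro y hy
    simp
  smul_mem' := by
    intro c x hx y hy
    simp only [Set.mem_setOf_eq] at hx
    simp [hx y hy]



namespace Statement3Aux

open Module

variable {L : Type*} [AddCommGroup L] [Module ℂ L]
variable {g : ℤ → Submodule ℂ L}

/-- A projection package for an internal direct sum decomposition. -/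
structure Proj (g : ℤ → Submodule ℂ L) where
  p : ℤ → L →ₗ[ℂ] L
  mem : ∀ j x, p j x ∈ g j
  diag : ∀ {j x}, x ∈ g j → p j x = x
  off : ∀ {i j x}, x ∈ g i → i ≠ j → p j x = 0
  spec : ∀ x : L, ∃ s : Finset ℤ, (∀ j ∉ s, p j x = 0) ∧ x = ∑ j ∈ s, p j x

noncomputable def mkProj (hint : DirectSum.IsInternal fun i : ℤ => g i) : Proj g := by
  classical
  letI : DirectSum.Decomposition (fun i : ℤ => g i) := hint.chooseDecomposition
  refine ⟨fun j => (g j).subtype ∘ₗ (DirectSum.component ℂ ℤ (fun i => ↥(g i)) j) ∘ₗ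
      (DirectSum.decomposeLinearEquiv (fun i : ℤ => g i)).toLinearMap, ?_, ?_, ?_, ?_⟩
  · intro j x
    exact ((DirectSum.decompose (fun i : ℤ => g i) x) j).2
  · intro j x hx
    show ((DirectSum.decompose (fun i : ℤ => g i) x) j : L) = x
    exact DirectSum.decompose_of_mem_same (fun i : ℤ => g i) hx
  · intro i j x hx hij
    show ((DirectSum.decompose (fun i : ℤ => g i) x) j : L) = 0
    rw [DirectSum.decompose_of_mem_ne (fun i : ℤ => g i) hx hij]
  · intro x
    refine ⟨(DirectSum.decompose (fun i : ℤ => g i) x).support, ?_, ?_⟩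
    · intro j hj
      have : (DirectSum.decompose (fun i : ℤ => g i) x) j = 0 := by
        simpa using DFinsupp.notMem_support_iff.mp hj
      show ((DirectSum.decompose (fun i : ℤ => g i) x) j : L) = 0
      rw [this]; rfl
    · conv_lhs => rw [← DirectSum.sum_support_decompose (fun i : ℤ => g i) x]
      exact Finset.sum_congr rfl fun j _ => rfl

theorem Proj.unique (pr : Proj g) (s : Finset ℤ) (d : ℤ → ℤ) (hd : Set.InjOn d s)
    (u : ℤ → L) (hu : ∀ j ∈ s, u j ∈ g (d j)) (hsum : ∑ j ∈ s, u j = 0) :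
    ∀ j ∈ s, u j = 0 := by
  intro j0 hj0
  have h1 := congrArg (pr.p (d j0)) hsum
  rw [map_sum, map_zero] at h1
  rw [Finset.sum_eq_single_of_mem j0 hj0 (fun j hj hne => by
    refine pr.off (hu j hj) (fun hdd => hne (hd hj hj0 hdd)))] at h1
  rwa [pr.diag (hu j0 hj0)] at h1

theorem Proj.mem_biSup (pr : Proj g) {S : Set ℤ} {x : L} (hx : x ∈ ⨆ i ∈ S, g i) :
    ∀ j ∉ S, pr.p j x = 0 := by
  intro j hj
  have hle : (⨆ i ∈ S, g i) ≤ LinearMap.ker (pr.p j) := by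
    refine iSup₂_le fun i hi => fun y hy => ?_
    exact LinearMap.mem_ker.mpr (pr.off hy (by rintro rfl; exact hj hi))
  exact LinearMap.mem_ker.mp (hle hx)

theorem Proj.mem_biSup_of (pr : Proj g) {S : Set ℤ} {x : L}
    (hx : ∀ j, pr.p j x = 0 ∨ j ∈ S) : x ∈ ⨆ i ∈ S, g i := by
  obtain ⟨s, hs0, hs⟩ := pr.spec x
  rw [hs]
  refine Submodule.sum_mem _ fun j hj => ?_
  rcases hx j with h | h
  · rw [h]; exact Submodule.zero_mem _
  · exact Submodule.mem_iSup_of_mem j (Submodule.mem_iSup_of_mem h (pr.mem j x))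

theorem Proj.spec' (pr : Proj g) (x : L) (s₀ : Finset ℤ) :
    ∃ s : Finset ℤ, s₀ ⊆ s ∧ (∀ j ∉ s, pr.p j x = 0) ∧ x = ∑ j ∈ s, pr.p j x := by
  classical
  obtain ⟨s, hs0, hs⟩ := pr.spec x
  refine ⟨s ∪ s₀, Finset.subset_union_right, ?_, ?_⟩
  · intro j hj
    exact hs0 j (fun hjs => hj (Finset.mem_union_left _ hjs))
  · conv_lhs => rw [hs]
    exact Finset.sum_subset Finset.subset_union_left (fun j hj hjs => hs0 j hjs)



variable {L : Type*} [AddCommGroup L] [Module ℂ L]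

theorem pow_mem_g (F : Module.End ℂ L) (g : ℤ → Submodule ℂ L) (d : ℤ)
    (hFg : ∀ i : ℤ, ∀ x ∈ g i, F x ∈ g (i + d)) :
    ∀ (k : ℕ) (i : ℤ), ∀ x ∈ g i, (F ^ k) x ∈ g (i + d * k) := by
  intro k
  induction k with
  | zero => intro i x hx; simpa using hx
  | succ k ih =>
    intro i x hx
    have h1 : (F ^ (k + 1)) x = F ((F ^ k) x) := by rw [pow_succ']; rfl
    have h2 : (i : ℤ) + d * ((k : ℕ) + 1 : ℕ) = (i + d * k) + d := by push_cast; ring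
    rw [h1, h2]
    exact hFg _ _ (ih i x hx)

theorem comm_EFpow (E F : Module.End ℂ L) (g : ℤ → Submodule ℂ L)
    (hFg : ∀ i : ℤ, ∀ x ∈ g i, F x ∈ g (i - 2))
    (hEF : ∀ i : ℤ, ∀ x ∈ g i, E (F x) = F (E x) + (i : ℂ) • x)
    (j : ℤ) (u : L) (hu : u ∈ g j) (hFE : F (E u) = 0) :
    ∀ k : ℕ, E ((F ^ (k + 1)) u) = ((((k : ℕ) + 1 : ℂ)) * ((j : ℂ) - (k : ℕ))) • (F ^ k) u := by
  have hFmem : ∀ (k : ℕ), (F ^ k) u ∈ g (j + (-2) * k) := fun k =>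
    pow_mem_g F g (-2) (fun i x hx => by simpa [sub_eq_add_neg] using hFg i x hx) k j u hu
  intro k
  induction k with
  | zero =>
    have h1 : (F ^ (0 + 1)) u = F u := by rw [pow_one]
    rw [h1, hEF j u hu, hFE, zero_add]
    simp
  | succ k ih =>
    have h1 : (F ^ (k + 1 + 1)) u = E (F ((F ^ (k + 1)) u)) ∨ True := Or.inr trivial
    have h1a : (F ^ (k + 1 + 1)) u = F ((F ^ (k + 1)) u) := by rw [pow_succ']; rfl
    have h1b : F ((F ^ k) u) = (F ^ (k + 1)) u := by rw [pow_succ']; rfl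
    calc E ((F ^ (k + 1 + 1)) u) = E (F ((F ^ (k + 1)) u)) := by rw [h1a]
      _ = F (E ((F ^ (k + 1)) u)) + ((j + (-2) * ((k + 1 : ℕ)) : ℤ) : ℂ) • (F ^ (k + 1)) u := by
          rw [hEF _ _ (hFmem (k + 1))]
      _ = ((((k : ℕ) + 1 : ℂ)) * ((j : ℂ) - (k : ℕ))) • (F ^ (k + 1)) u
            + ((j + (-2) * ((k + 1 : ℕ)) : ℤ) : ℂ) • (F ^ (k + 1)) u := by
          rw [ih, map_smul, h1b]
      _ = ((((k + 1 : ℕ) : ℂ) + 1) * ((j : ℂ) - ((k + 1 : ℕ) : ℂ))) • (F ^ (k + 1)) u := by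
          rw [← add_smul]; congr 1; push_cast; ring
      _ = ((((k + 1 : ℕ) : ℂ) + 1) * ((j : ℂ) - ((k + 1 : ℕ)))) • (F ^ (k + 1)) u := by norm_cast

theorem FE_inj (E F : Module.End ℂ L) (g : ℤ → Submodule ℂ L)
    (hFg : ∀ i : ℤ, ∀ x ∈ g i, F x ∈ g (i - 2))
    (hEF : ∀ i : ℤ, ∀ x ∈ g i, E (F x) = F (E x) + (i : ℂ) • x)
    (hFnil : ∀ i : ℤ, ∀ x ∈ g i, ∃ N : ℕ, (F ^ N) x = 0)
    (j : ℤ) (hj : j ≤ -1) (u : L) (hu : u ∈ g j) (hFE : F (E u) = 0) : u = 0 := by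
  obtain ⟨N, hN⟩ := hFnil j u hu
  induction N with
  | zero => simpa using hN
  | succ N ih =>
    have h1 := comm_EFpow E F g hFg hEF j u hu hFE N
    rw [hN, map_zero] at h1
    have hscal : ((((N : ℕ) + 1 : ℂ)) * ((j : ℂ) - (N : ℕ))) ≠ 0 := by
      refine mul_ne_zero ?_ ?_
      · have : ((N + 1 : ℕ) : ℂ) ≠ 0 := Nat.cast_ne_zero.mpr (Nat.succ_ne_zero N)
        push_cast at this; exact this
      have : ((j : ℂ) - (N : ℕ)) = ((j - (N : ℕ) : ℤ) : ℂ) := by push_cast; ring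
      rw [this]
      exact_mod_cast (by omega : (j - (N : ℕ) : ℤ) ≠ 0)
    exact ih ((smul_eq_zero.mp h1.symm).resolve_left hscal)

theorem comm_FEpow (E F : Module.End ℂ L) (g : ℤ → Submodule ℂ L)
    (hEg : ∀ i : ℤ, ∀ x ∈ g i, E x ∈ g (i + 2))
    (hEF : ∀ i : ℤ, ∀ x ∈ g i, E (F x) = F (E x) + (i : ℂ) • x)
    (j : ℤ) (y : L) (hy : y ∈ g j) (hFy : F y = 0) :
    ∀ k : ℕ, F ((E ^ (k + 1)) y) = (-(((k : ℕ) + 1 : ℂ) * ((j : ℂ) + (k : ℕ)))) • (E ^ k) y := by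
  have hEmem : ∀ (k : ℕ), (E ^ k) y ∈ g (j + 2 * k) := fun k =>
    pow_mem_g E g 2 hEg k j y hy
  intro k
  induction k with
  | zero =>
    have h1 : (E ^ (0 + 1)) y = E y := by rw [pow_one]
    have h2 := hEF j y hy
    rw [hFy, map_zero] at h2
    have h3 : F (E y) = -((j : ℂ) • y) := by
      rw [eq_comm, neg_eq_iff_add_eq_zero, add_comm]
      exact h2.symm
    rw [h1, h3]
    simp
  | succ k ih =>
    have h1 : (E ^ (k + 1 + 1)) y = E ((E ^ (k + 1)) y) := by rw [pow_succ']; rfl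
    have h1b : E ((E ^ k) y) = (E ^ (k + 1)) y := by rw [pow_succ']; rfl
    have h5 : F (E ((E ^ (k + 1)) y)) = E (F ((E ^ (k + 1)) y))
        - ((j + 2 * ((k + 1 : ℕ)) : ℤ) : ℂ) • (E ^ (k + 1)) y := by
      rw [hEF _ _ (hEmem (k + 1))]; abel
    calc F ((E ^ (k + 1 + 1)) y) = F (E ((E ^ (k + 1)) y)) := by rw [h1]
      _ = E (F ((E ^ (k + 1)) y)) - ((j + 2 * ((k + 1 : ℕ)) : ℤ) : ℂ) • (E ^ (k + 1)) y := h5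
      _ = (-(((k : ℕ) + 1 : ℂ) * ((j : ℂ) + (k : ℕ)))) • (E ^ (k + 1)) y
            - ((j + 2 * ((k + 1 : ℕ)) : ℤ) : ℂ) • (E ^ (k + 1)) y := by
          rw [ih, map_smul, h1b]
      _ = (-(((k + 1 : ℕ) : ℂ) + 1) * ((j : ℂ) + ((k + 1 : ℕ) : ℂ))) • (E ^ (k + 1)) y := by
          rw [← sub_smul]; congr 1; push_cast; ring
      _ = (-((((k + 1 : ℕ) : ℂ) + 1) * ((j : ℂ) + ((k + 1 : ℕ))))) • (E ^ (k + 1)) y := by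
          rw [neg_mul]

theorem pow_prod (E F : Module.End ℂ L) (g : ℤ → Submodule ℂ L)
    (hEg : ∀ i : ℤ, ∀ x ∈ g i, E x ∈ g (i + 2))
    (hEF : ∀ i : ℤ, ∀ x ∈ g i, E (F x) = F (E x) + (i : ℂ) • x)
    (j : ℤ) (y : L) (hy : y ∈ g j) (hFy : F y = 0) :
    ∀ m : ℕ, (F ^ m) ((E ^ m) y) =
      (∏ k ∈ Finset.range m, (-(((k : ℕ) + 1 : ℂ) * ((j : ℂ) + (k : ℕ))))) • y := by
  intro m
  induction m with
  | zero => simp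
  | succ m ih =>
    have hc := comm_FEpow E F g hEg hEF j y hy hFy m
    calc (F ^ (m + 1)) ((E ^ (m + 1)) y) = (F ^ m) (F ((E ^ (m + 1)) y)) := by
          rw [pow_succ]; rfl
      _ = (F ^ m) ((-(((m : ℕ) + 1 : ℂ) * ((j : ℂ) + (m : ℕ)))) • (E ^ m) y) := by rw [hc]
      _ = (-(((m : ℕ) + 1 : ℂ) * ((j : ℂ) + (m : ℕ)))) • ((F ^ m) ((E ^ m) y)) := by
          rw [map_smul]
      _ = (∏ k ∈ Finset.range (m + 1), (-(((k : ℕ) + 1 : ℂ) * ((j : ℂ) + (k : ℕ))))) • y := by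
          rw [ih, smul_smul, Finset.prod_range_succ, mul_comm]

theorem degree_decomp (E F : Module.End ℂ L) (g : ℤ → Submodule ℂ L)
    (hEg : ∀ i : ℤ, ∀ x ∈ g i, E x ∈ g (i + 2))
    (hFg : ∀ i : ℤ, ∀ x ∈ g i, F x ∈ g (i - 2))
    (hEF : ∀ i : ℤ, ∀ x ∈ g i, E (F x) = F (E x) + (i : ℂ) • x)
    (i : ℤ) (hi : i ≤ 1) :
    ∀ (N : ℕ) (x : L), x ∈ g i → (F ^ N) x = 0 →
      x ∈ Submodule.map E (g (i - 2)) ⊔ LinearMap.ker F := by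
  intro N
  induction N with
  | zero =>
    intro x hx h0
    rw [pow_zero, Module.End.one_apply] at h0
    rw [h0]; exact Submodule.zero_mem _
  | succ N ih =>
    intro x hx hFx
    cases N with
    | zero =>
      refine Submodule.mem_sup_right (LinearMap.mem_ker.mpr ?_)
      rw [← pow_one F]; exact hFx
    | succ M =>
      have hFmapsto : ∀ i : ℤ, ∀ x ∈ g i, F x ∈ g (i + (-2)) := fun i x hx => by
        simpa [sub_eq_add_neg] using hFg i x hx
      set y := (F ^ (M + 1)) x with hydef
      have hymem : y ∈ g (i + (-2) * ((M + 1 : ℕ))) := pow_mem_g F g (-2) hFmapsto (M + 1) i x hx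
      set jy : ℤ := i + (-2) * ((M + 1 : ℕ)) with hjy
      have hFy : F y = 0 := by
        have h2 : (F ^ (M + 1 + 1)) x = F ((F ^ (M + 1)) x) := by rw [pow_succ']; rfl
        rw [hydef, ← h2]; exact hFx
      set d : ℂ := ∏ k ∈ Finset.range (M + 1), (-(((k : ℕ) + 1 : ℂ) * ((jy : ℂ) + (k : ℕ))))
        with hd
      have hdne : d ≠ 0 := by
        rw [hd, Finset.prod_ne_zero_iff]
        intro k hk
        rw [Finset.mem_range] at hk
        refine neg_ne_zero.mpr (mul_ne_zero ?_ ?_)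
        · have h3 : ((k + 1 : ℕ) : ℂ) ≠ 0 := Nat.cast_ne_zero.mpr (Nat.succ_ne_zero k)
          push_cast at h3; exact h3
        · have h4 : ((jy : ℂ) + (k : ℕ)) = ((jy + k : ℤ) : ℂ) := by push_cast; ring
          rw [h4, Int.cast_ne_zero]
          omega
      have hprod := pow_prod E F g hEg hEF jy y hymem hFy (M + 1)
      rw [← hd] at hprod
      have hEy : (E ^ (M + 1)) y ∈ g i := by
        have h5 := pow_mem_g E g 2 hEg (M + 1) jy y hymem
        have h6 : jy + 2 * ((M + 1 : ℕ) : ℤ) = i := by omega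
        rwa [h6] at h5
      set x' : L := x - d⁻¹ • ((E ^ (M + 1)) y) with hx'
      have hx'mem : x' ∈ g i := sub_mem hx (Submodule.smul_mem _ _ hEy)
      have hFx' : (F ^ (M + 1)) x' = 0 := by
        rw [hx', map_sub, map_smul, ← hydef, hprod, smul_smul, inv_mul_cancel₀ hdne,
          one_smul, sub_self]
      have hmem' := ih x' hx'mem hFx'
      have hsplit : x = x' + d⁻¹ • ((E ^ (M + 1)) y) := by rw [hx']; abel
      rw [hsplit]
      refine Submodule.add_mem _ hmem' (Submodule.mem_sup_left ?_)
      have hEM : (E ^ M) y ∈ g (i - 2) := by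
        have h7 := pow_mem_g E g 2 hEg M jy y hymem
        have h8 : jy + 2 * ((M : ℕ) : ℤ) = i - 2 := by omega
        rwa [h8] at h7
      have h9 : d⁻¹ • ((E ^ (M + 1)) y) = E (d⁻¹ • ((E ^ M) y)) := by
        rw [map_smul]; congr 1; rw [pow_succ']; rfl
      rw [h9]
      exact Submodule.mem_map_of_mem (Submodule.smul_mem _ _ hEM)


end Statement3Aux

/-- Let `m = ⊕_{i ≤ -2} g(i) ⊕ g(-1)'` and `m' = m` (if `dim g(-1)₁` is
even) or `m' = m ⊕ ℂ·v` (if `dim g(-1)₁` is odd, for the distinguished vector `v`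
orthogonal to `g(-1)'` with `⟨v,v⟩ = 1`).  Then the annihilator
`m^⊥ = {y ∈ g : (y, m) = 0}` decomposes as a direct sum `m^⊥ = [m', e] ⊕ g^f`, where
`g^f = ker (ad f)` is the centralizer of `f` in `g`. -/
theorem statement3 {L : Type*} [AddCommGroup L] [Module ℂ L] [FiniteDimensional ℂ L]
    (br : L →ₗ[ℂ] L →ₗ[ℂ] L)       -- the Lie superbracket
    (B : L →ₗ[ℂ] L →ₗ[ℂ] ℂ)        -- the bilinear form (·,·)
    (P : Bool → Submodule ℂ L)      -- parity decomposition: P false even, P true odd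
    (hPcompl : IsCompl (P false) (P true))
    (hbrP : ∀ (p q : Bool), ∀ x ∈ P p, ∀ y ∈ P q, br x y ∈ P (xor p q))
    (hskew : ∀ (p q : Bool), ∀ x ∈ P p, ∀ y ∈ P q,
      br x y = (if p && q then (1 : ℂ) else -1) • br y x)
    (hjac : ∀ (p q : Bool), ∀ x ∈ P p, ∀ y ∈ P q, ∀ z : L,
      br x (br y z) = br (br x y) z + (if p && q then (-1 : ℂ) else 1) • br y (br x z))
    (g : ℤ → Submodule ℂ L)         -- the Dynkin grading
    (hinternal : DirectSum.IsInternal fun i : ℤ => g i)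
    (hgP : ∀ i : ℤ, g i = (g i ⊓ P false) ⊔ (g i ⊓ P true))
    (e h f : L)
    (hgrad : ∀ (i : ℤ), ∀ x ∈ g i, br h x = (i : ℂ) • x)
    (he : e ∈ g 2) (he0 : e ∈ P false) (hf : f ∈ g (-2)) (hf0 : f ∈ P false)
    (hhe : br h e = (2 : ℂ) • e) (hhf : br h f = (-2 : ℂ) • f) (hef : br e f = h)
    -- the bilinear form is invariant, supersymmetric, even and nondegenerate
    (hBinv : ∀ a b c : L, B (br a b) c = B a (br b c))
    (hBsuper : ∀ (p q : Bool), ∀ x ∈ P p, ∀ y ∈ P q,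
      B x y = (if p && q then (-1 : ℂ) else 1) * B y x)
    (hBeven : ∀ x ∈ P false, ∀ y ∈ P true, B x y = 0)
    (hBnondeg : ∀ x : L, (∀ y : L, B x y = 0) → x = 0)
    -- g(-1)' : a maximal graded isotropic subspace of g(-1) for the form ⟨x,y⟩ = (e,[x,y])
    (g1' : Submodule ℂ L) (hg1'le : g1' ≤ g (-1))
    (hg1'graded : g1' = (g1' ⊓ P false) ⊔ (g1' ⊓ P true))
    (hiso : ∀ x ∈ g1', ∀ y ∈ g1', B e (br x y) = 0)
    (hmax : ∀ W : Submodule ℂ L, g1' ≤ W → W ≤ g (-1) →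
      W = (W ⊓ P false) ⊔ (W ⊓ P true) →
      (∀ x ∈ W, ∀ y ∈ W, B e (br x y) = 0) → W = g1')
    -- m = ⊕_{i ≤ -2} g(i) ⊕ g(-1)'
    (m m' : Submodule ℂ L)
    (hm : m = (⨆ i ∈ Set.Iic (-2 : ℤ), g i) ⊔ g1')
    -- m' = m when dim g(-1)₁ is even; m' = m ⊕ ℂv when dim g(-1)₁ is odd, where
    -- v ∈ g(-1)₁ is orthogonal to g(-1)' and satisfies ⟨v,v⟩ = 1
    (hm' : (Even (Module.finrank ℂ ↥(g (-1) ⊓ P true)) ∧ m' = m) ∨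
      (¬ Even (Module.finrank ℂ ↥(g (-1) ⊓ P true)) ∧ ∃ v : L,
        v ∈ g (-1) ⊓ P true ∧ (∀ y ∈ g1', B e (br v y) = 0) ∧ B e (br v v) = 1 ∧
        m' = m ⊔ Submodule.span ℂ {v})) :
    -- conclusion: m^⊥ = [m', e] ⊕ g^f
    perpSubmodule B m =
        Submodule.map (LinearMap.flip br e) m' ⊔ LinearMap.ker (br f) ∧
      Disjoint (Submodule.map (LinearMap.flip br e) m') (LinearMap.ker (br f)) := by
  classical
  open Statement3Aux in
  -- ## parity basics
  have hPtop : P false ⊔ P true = ⊤ := codisjoint_iff.mp hPcompl.codisjoint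
  have hdecP : ∀ x : L, ∃ a ∈ P false, ∃ b ∈ P true, x = a + b := by
    intro x
    have hx : x ∈ P false ⊔ P true := by rw [hPtop]; trivial
    obtain ⟨a, ha, b, hb, hab⟩ := Submodule.mem_sup.mp hx
    exact ⟨a, ha, b, hb, hab.symm⟩
  have hflip : ∀ c ∈ P false, ∀ x : L, br x c = - br c x := by
    intro c hc x
    obtain ⟨a, ha, b, hb, rfl⟩ := hdecP x
    have h1 := hskew false false a ha c hc
    have h2 := hskew true false b hb c hc
    simp only [Bool.and_false, if_neg Bool.false_ne_true, neg_smul, one_smul] at h1 h2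
    rw [map_add, LinearMap.add_apply, h1, h2, map_add]
    abel
  have hmidP : h ∈ P false := by
    rw [← hef]
    simpa using hbrP false false e he0 f hf0
  -- ## Jacobi specializations
  have hHE : ∀ z : L, br h (br e z) = (2 : ℂ) • br e z + br e (br h z) := by
    intro z
    have h1 := hjac false false h hmidP e he0 z
    rw [hhe] at h1
    simpa using h1
  have hHF : ∀ z : L, br h (br f z) = (-2 : ℂ) • br f z + br f (br h z) := by
    intro z
    have h1 := hjac false false h hmidP f hf0 z
    rw [hhf] at h1
    simpa using h1
  have hEFc : ∀ z : L, br e (br f z) = br h z + br f (br e z) := by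
    intro z
    have h1 := hjac false false e he0 f hf0 z
    rw [hef] at h1
    simpa using h1
  -- ## the projection package
  have pr : Statement3Aux.Proj g := Statement3Aux.mkProj hinternal
  -- ## eigenvectors of ad h lie in the graded pieces
  have eig : ∀ (c : ℤ) (y : L), br h y = (c : ℂ) • y → y ∈ g c := by
    intro c y hy
    obtain ⟨s, hs0, hs⟩ := pr.spec y
    have h1 : br h y = ∑ j ∈ s, (j : ℂ) • pr.p j y := by
      conv_lhs => rw [hs]
      rw [map_sum]
      exact Finset.sum_congr rfl fun j _ => hgrad j _ (pr.mem j y)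
    have hz : ∑ j ∈ s, (((j : ℂ) - c) • pr.p j y) = 0 := by
      have h2 : ∑ j ∈ s, (((j : ℂ) - c) • pr.p j y)
          = (∑ j ∈ s, (j : ℂ) • pr.p j y) - (∑ j ∈ s, (c : ℂ) • pr.p j y) := by
        rw [← Finset.sum_sub_distrib]
        exact Finset.sum_congr rfl fun j _ => by rw [sub_smul]
      rw [h2, ← h1, ← Finset.smul_sum, ← hs, hy, sub_self]
    have h3 := pr.unique s id (Set.injOn_id _) (fun j => ((j : ℂ) - c) • pr.p j y)
      (fun j _ => Submodule.smul_mem _ _ (pr.mem j y)) hz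
    rw [hs]
    refine Submodule.sum_mem _ fun j hj => ?_
    by_cases hjc : j = c
    · subst hjc; exact pr.mem j y
    · have h4 : pr.p j y = 0 := by
        rcases smul_eq_zero.mp (h3 j hj) with h5 | h5
        · exact absurd (by exact_mod_cast sub_eq_zero.mp h5) hjc
        · exact h5
      rw [h4]; exact Submodule.zero_mem _
  -- ## bracketing with e, f moves degrees
  have hEg : ∀ i : ℤ, ∀ x ∈ g i, br e x ∈ g (i + 2) := by
    intro i x hx
    refine eig _ _ ?_
    rw [hHE, hgrad i x hx, map_smul]
    push_cast
    module
  have hFg : ∀ i : ℤ, ∀ x ∈ g i, br f x ∈ g (i - 2) := by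
    intro i x hx
    refine eig _ _ ?_
    rw [hHF, hgrad i x hx, map_smul]
    push_cast
    module
  have hEFcomm : ∀ i : ℤ, ∀ x ∈ g i, br e (br f x) = br f (br e x) + (i : ℂ) • x := by
    intro i x hx
    rw [hEFc, hgrad i x hx, add_comm]
  -- ## finiteness of the grading, nilpotency
  haveI fint : Fintype {i : ℤ // g i ≠ ⊥} :=
    (hinternal.submodule_iSupIndep).fintypeNeBotOfFiniteDimensional
  have hfin : {i : ℤ | g i ≠ ⊥}.Finite := Set.finite_coe_iff.mp (@Finite.of_fintype _ fint)
  obtain ⟨lb, hlb⟩ := hfin.bddBelow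
  obtain ⟨ub, hub⟩ := hfin.bddAbove
  have hglow : ∀ j : ℤ, j < lb → g j = ⊥ := fun j hj => by
    by_contra hne
    exact absurd (hlb hne) (not_le.mpr hj)
  have hghigh : ∀ j : ℤ, ub < j → g j = ⊥ := fun j hj => by
    by_contra hne
    exact absurd (hub hne) (not_le.mpr hj)
  have hFnil : ∀ i : ℤ, ∀ x ∈ g i, ∃ N : ℕ, (((br f : Module.End ℂ L)) ^ N) x = 0 := by
    intro i x hx
    refine ⟨(i - lb).toNat + 1, ?_⟩
    have h1 : (((br f : Module.End ℂ L)) ^ ((i - lb).toNat + 1)) x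
        ∈ g (i + (-2) * ((i - lb).toNat + 1 : ℕ)) :=
      Statement3Aux.pow_mem_g (br f) g (-2)
        (fun i x hx => by simpa [sub_eq_add_neg] using hFg i x hx) _ i x hx
    have h2 : g (i + (-2) * ((i - lb).toNat + 1 : ℕ)) = ⊥ := by
      refine hglow _ ?_
      have h3 := Int.self_le_toNat (i - lb)
      push_cast
      omega
    rw [h2, Submodule.mem_bot] at h1
    exact h1
  have hEnil : ∀ i : ℤ, ∀ x ∈ g i, ∃ N : ℕ, (((br e : Module.End ℂ L)) ^ N) x = 0 := by
    intro i x hx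
    refine ⟨(ub - i).toNat + 1, ?_⟩
    have h1 : (((br e : Module.End ℂ L)) ^ ((ub - i).toNat + 1)) x
        ∈ g (i + 2 * ((ub - i).toNat + 1 : ℕ)) :=
      Statement3Aux.pow_mem_g (br e) g 2 hEg _ i x hx
    have h2 : g (i + 2 * ((ub - i).toNat + 1 : ℕ)) = ⊥ := by
      refine hghigh _ ?_
      have h3 := Int.self_le_toNat (ub - i)
      push_cast
      omega
    rw [h2, Submodule.mem_bot] at h1
    exact h1
  -- ## injectivity lemmas
  have hFEinj : ∀ j : ℤ, j ≤ -1 → ∀ u ∈ g j, br f (br e u) = 0 → u = 0 := by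
    intro j hj u hu hfe
    exact Statement3Aux.FE_inj (br e) (br f) g hFg hEFcomm hFnil j hj u hu hfe
  have hEFinj : ∀ j : ℤ, 1 ≤ j → ∀ u ∈ g j, br e (br f u) = 0 → u = 0 := by
    intro j hj u hu hef'
    have hFg' : ∀ i : ℤ, ∀ x ∈ (fun i : ℤ => g (-i)) i, br e x ∈ (fun i : ℤ => g (-i)) (i - 2) := by
      intro i x hx
      have h1 := hEg (-i) x hx
      have h2 : -i + 2 = -(i - 2) := by ring
      rwa [h2] at h1
    have hEF' : ∀ i : ℤ, ∀ x ∈ (fun i : ℤ => g (-i)) i,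
        br f (br e x) = br e (br f x) + (i : ℂ) • x := by
      intro i x hx
      have h1 := hEFcomm (-i) x hx
      push_cast at h1
      rw [h1]
      module
    have hEnil' : ∀ i : ℤ, ∀ x ∈ (fun i : ℤ => g (-i)) i,
        ∃ N : ℕ, ((br e : Module.End ℂ L) ^ N) x = 0 := fun i x hx => hEnil (-i) x hx
    exact Statement3Aux.FE_inj (br f) (br e) (fun i : ℤ => g (-i)) hFg' hEF' hEnil'
      (-j) (by omega) u (by simpa using hu) hef'
  have hkerF : ∀ j : ℤ, 1 ≤ j → ∀ u ∈ g j, br f u = 0 → u = 0 := by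
    intro j hj u hu hfu
    exact hEFinj j hj u hu (by rw [hfu, map_zero])
  have hdec : ∀ i : ℤ, i ≤ 1 → ∀ x ∈ g i,
      x ∈ Submodule.map (br e) (g (i - 2)) ⊔ LinearMap.ker (br f) := by
    intro i hi x hx
    obtain ⟨N, hN⟩ := hFnil i x hx
    exact Statement3Aux.degree_decomp (br e) (br f) g hEg hFg hEFcomm i hi N x hx hN
  -- ## B-facts
  have hBE : ∀ x y : L, B (br e x) y = B e (br x y) := fun x y => hBinv e x y
  have hBH : ∀ x y : L, B (br h x) y = - B x (br h y) := by
    intro x y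
    have h1 := hBinv x h y
    rw [hflip h hmidP x, map_neg, LinearMap.neg_apply] at h1
    linear_combination -h1
  have Borth : ∀ (i j : ℤ), i + j ≠ 0 → ∀ x ∈ g i, ∀ y ∈ g j, B x y = 0 := by
    intro i j hij x hx y hy
    have h0 := hBH x y
    rw [hgrad i x hx, hgrad j y hy] at h0
    simp only [LinearMap.map_smul, LinearMap.smul_apply, smul_eq_mul] at h0
    have h2 : ((i + j : ℤ) : ℂ) * B x y = 0 := by push_cast; linear_combination h0
    rcases mul_eq_zero.mp h2 with h3 | h3
    · exact absurd (by exact_mod_cast h3) hij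
    · exact h3
  have pairnd : ∀ a : ℤ, ∀ x ∈ g a, (∀ y ∈ g (-a), B x y = 0) → x = 0 := by
    intro a x hx hperp
    refine hBnondeg x fun y => ?_
    obtain ⟨s, hs0, hs⟩ := pr.spec y
    rw [hs, map_sum]
    refine Finset.sum_eq_zero fun j hj => ?_
    by_cases hja : j = -a
    · subst hja; exact hperp _ (pr.mem _ y)
    · exact Borth a j (by omega) x hx _ (pr.mem j y)
  -- ## parity facts for the pairing ⟨x,y⟩ = B e (br x y)
  have hBodd : ∀ (p q : Bool), p ≠ q → ∀ a ∈ P p, ∀ b ∈ P q, B e (br a b) = 0 := by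
    intro p q hpq a ha b hb
    have h1 := hbrP p q a ha b hb
    have h2 : xor p q = true := by revert hpq; cases p <;> cases q <;> simp
    rw [h2] at h1
    exact hBeven e he0 _ h1
  have hsymodd : ∀ a ∈ P true, ∀ b ∈ P true, br a b = br b a := by
    intro a ha b hb
    simpa using hskew true true a ha b hb
  have hskewf : ∀ a ∈ P false, ∀ b ∈ P false, br a b = - br b a := by
    intro a ha b hb
    simpa using hskew false false a ha b hb
  have hbrself : ∀ a ∈ P false, br a a = 0 := by
    intro a ha
    have h1 := hskewf a ha a ha
    have h2 : (2 : ℂ) • br a a = 0 := by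
      rw [two_smul]
      nth_rewrite 1 [h1]
      abel
    simpa using (smul_eq_zero.mp h2).resolve_left (by norm_num)
  have expandL : ∀ a b c : L, B e (br (a + b) c) = B e (br a c) + B e (br b c) := by
    intro a b c
    rw [map_add, LinearMap.add_apply, map_add]
  have expandR : ∀ a b c : L, B e (br a (b + c)) = B e (br a b) + B e (br a c) := by
    intro a b c
    rw [map_add, map_add]
  -- left-perp of g1' splits along parity
  have hsplitperp : ∀ x₀ x₁ : L, x₀ ∈ P false → x₁ ∈ P true →
      (∀ w ∈ g1', B e (br (x₀ + x₁) w) = 0) →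
      (∀ w ∈ g1', B e (br x₀ w) = 0) ∧ (∀ w ∈ g1', B e (br x₁ w) = 0) := by
    intro x₀ x₁ hx0 hx1 hperp
    have hcomp : ∀ w ∈ g1', ∃ w₀, w₀ ∈ g1' ∧ w₀ ∈ P false ∧ ∃ w₁, w₁ ∈ g1' ∧ w₁ ∈ P true ∧
        w = w₀ + w₁ := by
      intro w hw
      have hw' : w ∈ (g1' ⊓ P false) ⊔ (g1' ⊓ P true) := hg1'graded ▸ hw
      obtain ⟨w₀, hw₀, w₁, hw₁, hsum⟩ := Submodule.mem_sup.mp hw'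
      exact ⟨w₀, hw₀.1, hw₀.2, w₁, hw₁.1, hw₁.2, hsum.symm⟩
    constructor <;> intro w hw <;> obtain ⟨w₀, hw₀, hw₀p, w₁, hw₁, hw₁p, rfl⟩ := hcomp w hw
    · have h1 : B e (br x₀ w₁) = 0 := hBodd false true (by simp) x₀ hx0 w₁ hw₁p
      have h2 : B e (br x₁ w₀) = 0 := hBodd true false (by simp) x₁ hx1 w₀ hw₀p
      have h3 := hperp w₀ hw₀
      rw [expandL, h2, add_zero] at h3
      rw [expandR, h1, add_zero]
      exact h3
    · have h1 : B e (br x₀ w₁) = 0 := hBodd false true (by simp) x₀ hx0 w₁ hw₁p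
      have h2 : B e (br x₁ w₀) = 0 := hBodd true false (by simp) x₁ hx1 w₀ hw₀p
      have h3 := hperp w₁ hw₁
      rw [expandL, h1, zero_add] at h3
      rw [expandR, h2, zero_add]
      exact h3
  -- ## the maximality machinery
  have hgraded_sup : ∀ (w : L) (p : Bool), w ∈ P p → (g1' ⊔ Submodule.span ℂ {w}) =
      ((g1' ⊔ Submodule.span ℂ {w}) ⊓ P false) ⊔ ((g1' ⊔ Submodule.span ℂ {w}) ⊓ P true) := by
    intro w p hp
    refine le_antisymm ?_ (sup_le inf_le_left inf_le_left)
    refine sup_le ?_ ?_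
    · conv_lhs => rw [hg1'graded]
      refine sup_le ?_ ?_
      · exact le_trans (inf_le_inf_right _ le_sup_left) le_sup_left
      · exact le_trans (inf_le_inf_right _ le_sup_left) le_sup_right
    · have hwmem : w ∈ (g1' ⊔ Submodule.span ℂ {w}) ⊓ P p :=
        ⟨Submodule.mem_sup_right (Submodule.mem_span_singleton_self w), hp⟩
      have hsp : Submodule.span ℂ {w} ≤ (g1' ⊔ Submodule.span ℂ {w}) ⊓ P p :=
        Submodule.span_le.mpr (by simpa using hwmem)
      cases p
      · exact le_trans hsp le_sup_left
      · exact le_trans hsp le_sup_right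
  have expand2 : ∀ (a b : L) (t t' : ℂ) (c d : L),
      B e (br (a + t • c) (b + t' • d)) = B e (br a b) + t' * B e (br a d)
        + t * B e (br c b) + t * t' * B e (br c d) := by
    intro a b t t' c d
    simp only [map_add, map_smul, LinearMap.add_apply, LinearMap.smul_apply, smul_eq_mul]
    ring
  have key_iso : ∀ w : L, w ∈ P true → (∀ s ∈ g1', B e (br w s) = 0) →
      ∀ a ∈ g1', B e (br a w) = 0 := by
    intro w hw1 hwperp a ha
    obtain ⟨a', ha', ha'p, a'', ha'', ha''p, rfl⟩ := (by
      have hw' : a ∈ (g1' ⊓ P false) ⊔ (g1' ⊓ P true) := hg1'graded ▸ ha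
      obtain ⟨w₀, hw₀, w₁, hw₁, hsum⟩ := Submodule.mem_sup.mp hw'
      exact ⟨w₀, hw₀.1, hw₀.2, w₁, hw₁.1, hw₁.2, hsum.symm⟩ :
      ∃ w₀, w₀ ∈ g1' ∧ w₀ ∈ P false ∧ ∃ w₁, w₁ ∈ g1' ∧ w₁ ∈ P true ∧ a = w₀ + w₁)
    have h1 : B e (br a' w) = 0 := hBodd false true (by simp) a' ha'p w hw1
    have h2 : B e (br a'' w) = 0 := by
      rw [hsymodd a'' ha''p w hw1]
      exact hwperp a'' ha''
    rw [expandL, h1, h2, add_zero]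
  have key_odd : ∀ w : L, w ∈ g (-1) → w ∈ P true → (∀ s ∈ g1', B e (br w s) = 0) →
      B e (br w w) = 0 → w ∈ g1' := by
    intro w hwg hw1 hwperp hww
    have hWeq := hmax (g1' ⊔ Submodule.span ℂ {w}) le_sup_left
      (sup_le hg1'le (Submodule.span_le.mpr (by simpa using hwg)))
      (hgraded_sup w true hw1) ?_
    · exact hWeq ▸ (Submodule.mem_sup_right (Submodule.mem_span_singleton_self w))
    intro z hz z' hz'
    obtain ⟨a, ha, u, hu, hsum⟩ := Submodule.mem_sup.mp hz
    obtain ⟨t, ht⟩ := Submodule.mem_span_singleton.mp hu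
    obtain ⟨a', ha', u', hu', hsum'⟩ := Submodule.mem_sup.mp hz'
    obtain ⟨t', ht'⟩ := Submodule.mem_span_singleton.mp hu'
    rw [← hsum, ← hsum', ← ht, ← ht', expand2]
    rw [hiso a ha a' ha', key_iso w hw1 hwperp a ha, hwperp a' ha', hww]
    ring
  have key_even : ∀ w : L, w ∈ g (-1) → w ∈ P false → (∀ s ∈ g1', B e (br w s) = 0) →
      w ∈ g1' := by
    intro w hwg hw0 hwperp
    have hkeyiso : ∀ a ∈ g1', B e (br a w) = 0 := by
      intro a ha
      obtain ⟨a', ha', ha'p, a'', ha'', ha''p, rfl⟩ := (by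
        have hw' : a ∈ (g1' ⊓ P false) ⊔ (g1' ⊓ P true) := hg1'graded ▸ ha
        obtain ⟨w₀, hw₀, w₁, hw₁, hsum⟩ := Submodule.mem_sup.mp hw'
        exact ⟨w₀, hw₀.1, hw₀.2, w₁, hw₁.1, hw₁.2, hsum.symm⟩ :
        ∃ w₀, w₀ ∈ g1' ∧ w₀ ∈ P false ∧ ∃ w₁, w₁ ∈ g1' ∧ w₁ ∈ P true ∧ a = w₀ + w₁)
      have h1 : B e (br a' w) = 0 := by
        rw [hskewf a' ha'p w hw0, map_neg, hwperp a' ha', neg_zero]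
      have h2 : B e (br a'' w) = 0 := hBodd true false (by simp) a'' ha''p w hw0
      rw [expandL, h1, h2, add_zero]
    have hWeq := hmax (g1' ⊔ Submodule.span ℂ {w}) le_sup_left
      (sup_le hg1'le (Submodule.span_le.mpr (by simpa using hwg)))
      (hgraded_sup w false hw0) ?_
    · exact hWeq ▸ (Submodule.mem_sup_right (Submodule.mem_span_singleton_self w))
    intro z hz z' hz'
    obtain ⟨a, ha, u, hu, hsum⟩ := Submodule.mem_sup.mp hz
    obtain ⟨t, ht⟩ := Submodule.mem_span_singleton.mp hu
    obtain ⟨a', ha', u', hu', hsum'⟩ := Submodule.mem_sup.mp hz'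
    obtain ⟨t', ht'⟩ := Submodule.mem_span_singleton.mp hu'
    rw [← hsum, ← hsum', ← ht, ← ht', expand2]
    rw [hiso a ha a' ha', hkeyiso a ha, hwperp a' ha', hbrself w hw0]
    simp
  have no_bad : ∀ v' w : L, v' ∈ g (-1) → v' ∈ P true → w ∈ g (-1) → w ∈ P true →
      (∀ s ∈ g1', B e (br v' s) = 0) → (∀ s ∈ g1', B e (br w s) = 0) →
      B e (br w v') = 0 → B e (br v' v') ≠ 0 → B e (br w w) = 0 := by
    intro v' w hv'g hv'1 hwg hw1 hv'p hwp hwv' hc'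
    by_contra hd
    obtain ⟨sq, hsq⟩ := IsAlgClosed.exists_pow_nat_eq
      (-(B e (br w w)) / (B e (br v' v'))) (n := 2) (by norm_num)
    have hsqne : sq ≠ 0 := by
      intro hsq0
      rw [hsq0] at hsq
      have : -(B e (br w w)) / (B e (br v' v')) = 0 := by rw [← hsq]; ring
      rcases div_eq_zero_iff.mp this with h1 | h1
      · exact hd (by linear_combination -h1)
      · exact hc' h1
    have hu1 : w + sq • v' ∈ P true := add_mem hw1 (Submodule.smul_mem _ _ hv'1)
    have hug : w + sq • v' ∈ g (-1) := add_mem hwg (Submodule.smul_mem _ _ hv'g)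
    have hup : ∀ s ∈ g1', B e (br (w + sq • v') s) = 0 := by
      intro s hs
      rw [map_add, LinearMap.add_apply, map_add, map_smul, LinearMap.smul_apply, map_smul,
        hwp s hs, hv'p s hs, smul_zero, add_zero]
    have hvw : B e (br v' w) = 0 := by rw [hsymodd v' hv'1 w hw1]; exact hwv'
    have huu : B e (br (w + sq • v') (w + sq • v')) = 0 := by
      have h1 := expand2 w w sq sq v' v'
      rw [hwv', hvw] at h1
      rw [h1]
      have h2 : sq * sq = -(B e (br w w)) / (B e (br v' v')) := by
        rw [← hsq]; ring
      rw [h2]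
      field_simp
      ring
    have humem := key_odd _ hug hu1 hup huu
    have hzero := hv'p _ humem
    rw [expandR, hvw, zero_add, map_smul, map_smul, smul_eq_mul] at hzero
    rcases mul_eq_zero.mp hzero with h1 | h1
    · exact hsqne h1
    · exact hc' h1
  have orth_reduce : ∀ v' : L, v' ∈ g (-1) → v' ∈ P true → (∀ s ∈ g1', B e (br v' s) = 0) →
      B e (br v' v') ≠ 0 → ∀ z : L, z ∈ g (-1) → z ∈ P true → (∀ s ∈ g1', B e (br z s) = 0) →
      z ∈ g1' ⊔ Submodule.span ℂ {v'} := by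
    intro v' hv'g hv'1 hv'p hc' z hzg hz1 hzp
    set t : ℂ := B e (br z v') / B e (br v' v') with ht
    have hwg : z - t • v' ∈ g (-1) := sub_mem hzg (Submodule.smul_mem _ _ hv'g)
    have hw1 : z - t • v' ∈ P true := sub_mem hz1 (Submodule.smul_mem _ _ hv'1)
    have hwp : ∀ s ∈ g1', B e (br (z - t • v') s) = 0 := by
      intro s hs
      simp only [map_sub, map_smul, LinearMap.sub_apply, LinearMap.smul_apply, smul_eq_mul]
      rw [hzp s hs, hv'p s hs]
      ring
    have hwv' : B e (br (z - t • v') v') = 0 := by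
      simp only [map_sub, map_smul, LinearMap.sub_apply, LinearMap.smul_apply, smul_eq_mul]
      rw [ht]
      field_simp
      ring
    have hww := no_bad v' _ hv'g hv'1 hwg hw1 hv'p hwp hwv' hc'
    have hwin := key_odd _ hwg hw1 hwp hww
    have hzsplit : z = (z - t • v') + t • v' := by abel
    rw [hzsplit]
    exact Submodule.add_mem _ (Submodule.mem_sup_left hwin)
      (Submodule.mem_sup_right (Submodule.smul_mem _ _ (Submodule.mem_span_singleton_self v')))
  -- ## the kernel of ad f lies in nonpositive degrees
  have claimker : LinearMap.ker (br f : L →ₗ[ℂ] L) ≤ ⨆ i ∈ Set.Iic (0 : ℤ), g i := by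
    intro x hx
    have hfx : br f x = 0 := LinearMap.mem_ker.mp hx
    obtain ⟨s, hs0, hs⟩ := pr.spec x
    have hsum : ∑ j ∈ s, br f (pr.p j x) = 0 := by rw [← map_sum, ← hs, hfx]
    have hcomp := pr.unique s (fun j => j - 2) (fun a _ b _ hab => by simp only at hab; omega)
      (fun j => br f (pr.p j x)) (fun j _ => hFg j _ (pr.mem j x)) hsum
    refine pr.mem_biSup_of (fun j => ?_)
    by_cases hj : j ≤ 0
    · exact Or.inr (Set.mem_Iic.mpr hj)
    · left
      by_cases hjs : j ∈ s
      · exact hkerF j (by omega) _ (pr.mem j x) (hcomp j hjs)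
      · exact hs0 j hjs
  -- ## m' lies in negative degrees
  have hm'le : m' ≤ ⨆ i ∈ Set.Iic (-1 : ℤ), g i := by
    have hmle : m ≤ ⨆ i ∈ Set.Iic (-1 : ℤ), g i := by
      rw [hm]
      refine sup_le ?_ ?_
      · refine iSup₂_le fun i hi => ?_
        have hi' : i ≤ -2 := hi
        exact le_biSup g (Set.mem_Iic.mpr (by omega))
      · exact le_trans hg1'le (le_biSup g (Set.mem_Iic.mpr (by norm_num)))
    rcases hm' with ⟨_, hmm⟩ | ⟨_, v, hv, _, _, hmm⟩
    · rw [hmm]; exact hmle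
    · rw [hmm]
      refine sup_le hmle (Submodule.span_le.mpr ?_)
      simp only [Set.singleton_subset_iff, SetLike.mem_coe]
      exact le_biSup g (Set.mem_Iic.mpr (by norm_num)) hv.1
  have hmlem' : m ≤ m' := by
    rcases hm' with ⟨_, hmm⟩ | ⟨_, v, hv, _, _, hmm⟩
    · rw [hmm]
    · rw [hmm]; exact le_sup_left
  -- ## disjointness
  have hdisj : Disjoint (Submodule.map (br e : L →ₗ[ℂ] L) m') (LinearMap.ker (br f)) := by
    rw [Submodule.disjoint_def]
    intro z hz1 hz2
    obtain ⟨u, hu, rfl⟩ := Submodule.mem_map.mp hz1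
    have hfz : br f (br e u) = 0 := LinearMap.mem_ker.mp hz2
    obtain ⟨s, hs0, hs⟩ := pr.spec u
    have hsum : ∑ j ∈ s, br f (br e (pr.p j u)) = 0 := by
      rw [← map_sum, ← map_sum, ← hs, hfz]
    have hcomp := pr.unique s id (Set.injOn_id _) (fun j => br f (br e (pr.p j u)))
      (fun j _ => by
        have h2 := hFg _ _ (hEg j _ (pr.mem j u))
        simpa using h2)
      hsum
    have hu0 : u = 0 := by
      rw [hs]
      refine Finset.sum_eq_zero fun j hj => ?_
      by_cases hjle : j ≤ -1
      · exact hFEinj j hjle _ (pr.mem j u) (hcomp j hj)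
      · exact pr.mem_biSup (hm'le hu) j (by simpa using hjle)
    rw [hu0, map_zero]
  -- ## Claim A : perp m = Sup0 ⊔ T
  have claimA : perpSubmodule B m = (⨆ i ∈ Set.Iic (0 : ℤ), g i) ⊔
      (g 1 ⊓ perpSubmodule B g1') := by
    refine le_antisymm ?_ ?_
    · intro y hy
      have hyB : ∀ z ∈ m, B y z = 0 := hy
      obtain ⟨s, hsub1, hs0, hs⟩ := pr.spec' y {1}
      have hcompB : ∀ (j : ℤ), ∀ w ∈ g (-j), B (pr.p j y) w = B y w := by
        intro j w hw
        have hexp : B y w = ∑ j' ∈ s, B (pr.p j' y) w := by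
          conv_lhs => rw [hs]
          rw [map_sum, LinearMap.sum_apply]
        by_cases hjs : j ∈ s
        · rw [hexp, Finset.sum_eq_single_of_mem j hjs
            (fun j' _ hne => Borth j' (-j) (by omega) _ (pr.mem j' y) w hw)]
        · rw [hexp, Finset.sum_eq_zero
            (fun j' hj' => Borth j' (-j) (by
              have : j' ≠ j := fun hc => hjs (hc ▸ hj')
              omega) _ (pr.mem j' y) w hw), hs0 j hjs, map_zero, LinearMap.zero_apply]
      have hvanish : ∀ j : ℤ, 2 ≤ j → pr.p j y = 0 := by
        intro j hj
        refine pairnd j _ (pr.mem j y) (fun w hw => ?_)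
        rw [hcompB j w hw]
        refine hyB w ?_
        rw [hm]
        exact Submodule.mem_sup_left (Submodule.mem_iSup_of_mem (-j)
          (Submodule.mem_iSup_of_mem (Set.mem_Iic.mpr (by omega)) hw))
      have hp1T : pr.p 1 y ∈ g 1 ⊓ perpSubmodule B g1' := by
        refine ⟨pr.mem 1 y, fun w hw => ?_⟩
        rw [hcompB 1 w (hg1'le hw)]
        exact hyB w (by rw [hm]; exact Submodule.mem_sup_right hw)
      rw [hs]
      refine Submodule.sum_mem _ fun j hj => ?_
      rcases lt_trichotomy j 1 with hlt | heq | hgt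
      · exact Submodule.mem_sup_left (Submodule.mem_iSup_of_mem j
          (Submodule.mem_iSup_of_mem (Set.mem_Iic.mpr (by omega)) (pr.mem j y)))
      · subst heq
        exact Submodule.mem_sup_right hp1T
      · rw [hvanish j (by omega)]
        exact Submodule.zero_mem _
    · refine sup_le ?_ ?_
      · refine iSup₂_le fun i hi => ?_
        intro x hx
        have hi' : i ≤ 0 := hi
        have hker : m ≤ LinearMap.ker (B x) := by
          rw [hm]
          refine sup_le (iSup₂_le fun i' hi' => ?_) ?_
          · intro w hw
            have hii : i' ≤ -2 := hi'
            exact LinearMap.mem_ker.mpr (Borth i i' (by omega) x hx w hw)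
          · intro w hw
            exact LinearMap.mem_ker.mpr (Borth i (-1) (by omega) x hx w (hg1'le hw))
        exact fun z hz => LinearMap.mem_ker.mp (hker hz)
      · rintro t ⟨ht1, htperp⟩
        have hker : m ≤ LinearMap.ker (B t) := by
          rw [hm]
          refine sup_le (iSup₂_le fun i' hi' => ?_) ?_
          · intro w hw
            have hii : i' ≤ -2 := hi'
            exact LinearMap.mem_ker.mpr (Borth 1 i' (by omega) t ht1 w hw)
          · intro w hw
            exact LinearMap.mem_ker.mpr (htperp w hw)
        exact fun z hz => LinearMap.mem_ker.mp (hker hz)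
  have hg1'm : g1' ≤ m := by rw [hm]; exact le_sup_right
  have hsplitg1' : ∀ w ∈ g1', ∃ w₀, w₀ ∈ g1' ∧ w₀ ∈ P false ∧ ∃ w₁, w₁ ∈ g1' ∧ w₁ ∈ P true ∧
      w = w₀ + w₁ := by
    intro w hw
    have hw' : w ∈ (g1' ⊓ P false) ⊔ (g1' ⊓ P true) := hg1'graded ▸ hw
    obtain ⟨w₀, hw₀, w₁, hw₁, hsum⟩ := Submodule.mem_sup.mp hw'
    exact ⟨w₀, hw₀.1, hw₀.2, w₁, hw₁.1, hw₁.2, hsum.symm⟩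
  -- ## Claim T : T ≤ [m', e]
  have claimT : (g 1 ⊓ perpSubmodule B g1') ≤ Submodule.map (br e : L →ₗ[ℂ] L) m' := by
    rintro t ⟨ht1, htperp⟩
    obtain ⟨x, hxg, hxe⟩ : ∃ x, x ∈ g (-1) ∧ br e x = t := by
      have h1 := hdec 1 le_rfl t ht1
      obtain ⟨a, ha, b, hb, hab⟩ := Submodule.mem_sup.mp h1
      obtain ⟨x, hxg, hxe⟩ := Submodule.mem_map.mp ha
      have hxg' : x ∈ g (-1) := by
        have hidx : (1 : ℤ) - 2 = -1 := by norm_num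
        rwa [hidx] at hxg
      have hag : a ∈ g 1 := by
        have h2 := hEg (-1) x hxg'
        have hidx : (-1 : ℤ) + 2 = 1 := by norm_num
        rw [hidx] at h2
        rwa [hxe] at h2
      have hbg : b ∈ g 1 := by
        have hbeq : b = t - a := by rw [← hab]; abel
        rw [hbeq]
        exact sub_mem ht1 hag
      have hb0 : b = 0 := hkerF 1 le_rfl b hbg (LinearMap.mem_ker.mp hb)
      refine ⟨x, hxg', ?_⟩
      rw [hxe, ← hab, hb0, add_zero]
    have hxperp : ∀ w ∈ g1', B e (br x w) = 0 := by
      intro w hw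
      rw [← hBE, hxe]
      exact htperp w hw
    obtain ⟨x₀, hx₀, x₁, hx₁, hxsum⟩ := Submodule.mem_sup.mp ((hgP (-1)) ▸ hxg)
    have hsp := hsplitperp x₀ x₁ hx₀.2 hx₁.2 (fun w hw => by rw [hxsum]; exact hxperp w hw)
    have hx0in : x₀ ∈ g1' := key_even x₀ hx₀.1 hx₀.2 hsp.1
    have hx1in : x₁ ∈ m' := by
      rcases hm' with ⟨heven, hmm⟩ | ⟨hodd, v, hv, hvperp, hvv, hmm⟩
      · by_cases hcx : B e (br x₁ x₁) = 0
        · exact hmm ▸ (hg1'm (key_odd x₁ hx₁.1 hx₁.2 hsp.2 hcx))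
        · exfalso
          set V₁ : Submodule ℂ L := g (-1) ⊓ P true with hV₁
          set bb : LinearMap.BilinForm ℂ ↥V₁ := LinearMap.mk₂ ℂ
            (fun a b : ↥V₁ => B e (br (↑a) (↑b)))
            (fun a b c => by
              show B e (br (↑(a + b) : L) ↑c) = B e (br (↑a : L) ↑c) + B e (br (↑b : L) ↑c)
              rw [Submodule.coe_add, expandL])
            (fun cc a b => by
              show B e (br (↑(cc • a) : L) ↑b) = cc • B e (br (↑a : L) ↑b)
              rw [Submodule.coe_smul, map_smul, LinearMap.smul_apply, map_smul])
            (fun a b c => by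
              show B e (br (↑a : L) ↑(b + c)) = B e (br (↑a : L) ↑b) + B e (br (↑a : L) ↑c)
              rw [Submodule.coe_add, expandR])
            (fun cc a b => by
              show B e (br (↑a : L) ↑(cc • b)) = cc • B e (br (↑a : L) ↑b)
              rw [Submodule.coe_smul, map_smul, map_smul])
            with hbb
          have hbbap : ∀ a b : ↥V₁, bb a b = B e (br (↑a) (↑b)) := fun a b => by
            rw [hbb]; rfl
          have bbsymm : ∀ a b : ↥V₁, bb a b = bb b a := by
            intro a b
            rw [hbbap, hbbap, hsymodd _ a.2.2 _ b.2.2]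
          have bbrefl : bb.IsRefl := fun a b hab => by rw [bbsymm]; exact hab
          have bbnd : bb.SeparatingLeft := by
            intro a ha
            have hEa : br e ↑a = 0 := by
              refine hBnondeg _ (fun y => ?_)
              obtain ⟨s, hs0, hs⟩ := pr.spec y
              rw [hs, map_sum]
              refine Finset.sum_eq_zero fun j hj => ?_
              by_cases hj1 : j = -1
              · subst hj1
                obtain ⟨z₀, hz₀, z₁, hz₁, hzsum⟩ :=
                  Submodule.mem_sup.mp ((hgP (-1)) ▸ pr.mem (-1) y)
                have hodd : br e ↑a ∈ P true := by
                  simpa using hbrP false true e he0 ↑a a.2.2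
                have hA : B (br e ↑a) z₀ = 0 := by
                  have hsup := hBsuper true false _ hodd z₀ hz₀.2
                  rw [hBeven z₀ hz₀.2 _ hodd] at hsup
                  simpa using hsup
                have hB1 : B (br e ↑a) z₁ = 0 := by
                  rw [hBE]
                  have := ha ⟨z₁, hz₁⟩
                  rw [hbbap] at this
                  exact this
                rw [← hzsum, map_add, hA, hB1, add_zero]
              · have h1 : br e ↑a ∈ g 1 := by
                  have h2 := hEg (-1) ↑a a.2.1
                  have hidx : (-1 : ℤ) + 2 = 1 := by norm_num
                  rwa [hidx] at h2
                exact Borth 1 j (by omega) _ h1 _ (pr.mem j y)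
            have h3 := hFEinj (-1) le_rfl ↑a a.2.1 (by rw [hEa, map_zero])
            exact Subtype.ext h3
          set Lam : Submodule ℂ ↥V₁ := Submodule.comap V₁.subtype g1' with hLam
          set xb : ↥V₁ := ⟨x₁, hx₁⟩ with hxb
          have horth : bb.orthogonal Lam = Lam ⊔ Submodule.span ℂ {xb} := by
            refine le_antisymm ?_ ?_
            · intro z hz
              rw [LinearMap.BilinForm.mem_orthogonal_iff] at hz
              have hzperp : ∀ w ∈ g1', B e (br (↑z) w) = 0 := by
                intro w hw
                obtain ⟨w₀, hw₀, hw₀p, w₁, hw₁, hw₁p, rfl⟩ := hsplitg1' w hw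
                rw [expandR]
                have h1 : B e (br (↑z) w₀) = 0 := hBodd true false (by simp) _ z.2.2 w₀ hw₀p
                have h2 : B e (br (↑z) w₁) = 0 := by
                  rw [hsymodd _ z.2.2 w₁ hw₁p]
                  have h4 := hz ⟨w₁, ⟨hg1'le hw₁, hw₁p⟩⟩ (Submodule.mem_comap.mpr hw₁)
                  rw [hbbap] at h4
                  exact h4
                rw [h1, h2, add_zero]
              have h3 := orth_reduce x₁ hx₁.1 hx₁.2 hsp.2 hcx ↑z z.2.1 z.2.2 hzperp
              obtain ⟨a, ha, u, hu, hsum⟩ := Submodule.mem_sup.mp h3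
              obtain ⟨tt, htt⟩ := Submodule.mem_span_singleton.mp hu
              have haV : a ∈ V₁ := by
                refine ⟨hg1'le ha, ?_⟩
                have haeq : a = ↑z - tt • x₁ := by rw [← hsum, ← htt]; abel
                rw [haeq]
                exact sub_mem z.2.2 (Submodule.smul_mem _ _ hx₁.2)
              have hzeq : z = ⟨a, haV⟩ + tt • xb := by
                apply Subtype.ext
                rw [Submodule.coe_add, Submodule.coe_smul, hxb]
                rw [← hsum, ← htt]
              rw [hzeq]
              exact Submodule.add_mem _
                (Submodule.mem_sup_left (Submodule.mem_comap.mpr ha))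
                (Submodule.mem_sup_right
                  (Submodule.smul_mem _ _ (Submodule.mem_span_singleton_self _)))
            · refine sup_le ?_ (Submodule.span_le.mpr ?_)
              · intro n hn
                rw [LinearMap.BilinForm.mem_orthogonal_iff]
                intro nn hnn
                rw [hbbap]
                exact hiso _ (Submodule.mem_comap.mp hnn) _ (Submodule.mem_comap.mp hn)
              · simp only [Set.singleton_subset_iff, SetLike.mem_coe]
                rw [LinearMap.BilinForm.mem_orthogonal_iff]
                intro nn hnn
                rw [hbbap]
                exact key_iso x₁ hx₁.2 hsp.2 _ (Submodule.mem_comap.mp hnn)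
          have hxnot : xb ∉ Lam := by
            intro hc
            exact hcx (hiso x₁ (Submodule.mem_comap.mp hc) x₁ (Submodule.mem_comap.mp hc))
          have hxne : xb ≠ 0 := by
            intro hc
            refine hcx ?_
            have : x₁ = (0 : L) := congrArg Subtype.val hc
            rw [this]
            simp
          have h1 := LinearMap.BilinForm.finrank_add_finrank_orthogonal (B := bb) bbrefl Lam
          rw [bb.orthogonal_top_eq_bot ⟨bbnd, fun a ha => bbnd a (fun y => by rw [bbsymm]; exact ha y)⟩, inf_bot_eq, finrank_bot, add_zero] at h1
          have h3 : Module.finrank ℂ ↥(bb.orthogonal Lam) = Module.finrank ℂ ↥Lam + 1 := by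
            rw [horth]
            have hdis : Lam ⊓ Submodule.span ℂ {xb} = ⊥ :=
              disjoint_iff.mp (Submodule.disjoint_span_singleton.mpr
                (fun hmem => absurd hmem hxnot))
            have h4 := Submodule.finrank_sup_add_finrank_inf_eq Lam (Submodule.span ℂ {xb})
            rw [hdis, finrank_bot, add_zero, finrank_span_singleton hxne] at h4
            exact h4
          rw [h3] at h1
          obtain ⟨r, hr⟩ := heven
          have hr' : Module.finrank ℂ ↥V₁ = r + r := hr
          omega
      · have h2 := orth_reduce v hv.1 hv.2 hvperp (by rw [hvv]; exact one_ne_zero)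
          x₁ hx₁.1 hx₁.2 hsp.2
        rw [hmm]
        exact (sup_le (le_trans hg1'm le_sup_left) le_sup_right) h2
    have hxm' : x ∈ m' := by
      rw [← hxsum]
      exact add_mem (hmlem' (hg1'm hx0in)) hx1in
    exact ⟨x, hxm', hxe⟩
  -- ## Claim B
  have claimB : Submodule.map (br e : L →ₗ[ℂ] L) m' ⊔ LinearMap.ker (br f) =
      (⨆ i ∈ Set.Iic (0 : ℤ), g i) ⊔ (g 1 ⊓ perpSubmodule B g1') := by
    refine le_antisymm ?_ ?_
    · refine sup_le ?_ (le_trans claimker le_sup_left)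
      rw [Submodule.map_le_iff_le_comap]
      have hg1'comap : g1' ≤ Submodule.comap (br e : L →ₗ[ℂ] L)
          ((⨆ i ∈ Set.Iic (0 : ℤ), g i) ⊔ (g 1 ⊓ perpSubmodule B g1')) := by
        intro x hx
        rw [Submodule.mem_comap]
        refine Submodule.mem_sup_right ⟨?_, ?_⟩
        · have h2 := hEg (-1) x (hg1'le hx)
          have hidx : (-1 : ℤ) + 2 = 1 := by norm_num
          rwa [hidx] at h2
        · intro w hw
          rw [hBE]
          exact hiso x hx w hw
      have hmcomap : m ≤ Submodule.comap (br e : L →ₗ[ℂ] L)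
          ((⨆ i ∈ Set.Iic (0 : ℤ), g i) ⊔ (g 1 ⊓ perpSubmodule B g1')) := by
        rw [hm]
        refine sup_le ?_ hg1'comap
        refine iSup₂_le fun i hi => ?_
        intro x hx
        rw [Submodule.mem_comap]
        have hi' : i ≤ -2 := hi
        exact Submodule.mem_sup_left (Submodule.mem_iSup_of_mem (i + 2)
          (Submodule.mem_iSup_of_mem (Set.mem_Iic.mpr (by omega)) (hEg i x hx)))
      rcases hm' with ⟨_, hmm⟩ | ⟨_, v, hv, hvperp, _, hmm⟩
      · rw [hmm]; exact hmcomap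
      · rw [hmm]
        refine sup_le hmcomap (Submodule.span_le.mpr ?_)
        simp only [Set.singleton_subset_iff, SetLike.mem_coe]
        rw [Submodule.mem_comap]
        refine Submodule.mem_sup_right ⟨?_, ?_⟩
        · have h2 := hEg (-1) v hv.1
          have hidx : (-1 : ℤ) + 2 = 1 := by norm_num
          rwa [hidx] at h2
        · intro w hw
          rw [hBE]
          exact hvperp w hw
    · refine sup_le ?_ (le_trans claimT le_sup_left)
      refine iSup₂_le fun i hi => ?_
      intro x hx
      have hi' : i ≤ 0 := hi
      have h1 := hdec i (by omega) x hx
      have hgm : g (i - 2) ≤ m' := by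
        refine le_trans ?_ hmlem'
        rw [hm]
        exact le_trans (le_biSup g (Set.mem_Iic.mpr (by omega))) le_sup_left
      exact (sup_le_sup (Submodule.map_mono hgm) le_rfl :
          Submodule.map (br e : L →ₗ[ℂ] L) (g (i - 2)) ⊔ LinearMap.ker (br f) ≤
            Submodule.map (br e : L →ₗ[ℂ] L) m' ⊔ LinearMap.ker (br f)) h1
  -- ## flip identification
  have claimC : Submodule.map (LinearMap.flip br e) m' =
      Submodule.map (br e : L →ₗ[ℂ] L) m' := by
    ext z
    simp only [Submodule.mem_map]
    constructor
    · rintro ⟨u, hu, rfl⟩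
      refine ⟨-u, neg_mem hu, ?_⟩
      rw [LinearMap.flip_apply, hflip e he0 u, map_neg]
    · rintro ⟨u, hu, rfl⟩
      refine ⟨-u, neg_mem hu, ?_⟩
      rw [LinearMap.flip_apply, hflip e he0 (-u), map_neg, neg_neg]
  constructor
  · rw [claimC, claimA, claimB]
  · rw [claimC]
    exact hdisj
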